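/- Let A ∈ {0,1}^{n×n} be the adjacency matrix of a finite graph in which every node has positive degree, D its degree matrix, T = D^{-1}A, X ∈ ℝ^{n×d}, W₁ ∈ ℝ^{d×d'}, and W₂ ∈ ℝ^{d'×d'} entrywise nonnegative with every column sum strictly less than 1. Then the matrix series ∑_{k=0}^∞ T^k X W₁ W₂^k converges entrywise, and its sum is the unique solution X̃ of the feature propagation equation X̃ = X W₁ + T X̃ W₂. -/

import Mathlib

open Matrix BigOperators

lemma fp_hasSum_mul_mul {n m d e : ℕ} (T : Matrix (Fin n) (Fin m) ℝ) (W : Matrix (Fin d) (Fin e) ℝ)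
    (f : ℕ → Matrix (Fin m) (Fin d) ℝ) (S : Matrix (Fin m) (Fin d) ℝ) (h : HasSum f S) :
    HasSum (fun k => T * f k * W) (T * S * W) := by
  let L : Matrix (Fin m) (Fin d) ℝ →ₗ[ℝ] Matrix (Fin n) (Fin e) ℝ :=
    { toFun := fun M => T * M * W,
      map_add' := fun M N => by simp [Matrix.mul_add, Matrix.add_mul],
      map_smul' := fun c M => by simp [Matrix.mul_smul, Matrix.smul_mul] }
  exact h.map L.toContinuousLinearMap L.toContinuousLinearMap.continuous

lemma fp_pow_rowsum {n : ℕ} (T : Matrix (Fin n) (Fin n) ℝ)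
    (h0 : ∀ i j, 0 ≤ T i j) (h1 : ∀ i, ∑ j, T i j = 1) (k : ℕ) :
    (∀ i j, 0 ≤ (T ^ k) i j) ∧ (∀ i, ∑ j, (T ^ k) i j = 1) := by
  induction k with
  | zero =>
    constructor
    · intro i j; simp [Matrix.one_apply]; positivity
    · intro i; simp [Matrix.one_apply]
  | succ k ih =>
    obtain ⟨ih0, ih1⟩ := ih
    constructor
    · intro i j
      rw [pow_succ, Matrix.mul_apply]
      exact Finset.sum_nonneg fun p _ => mul_nonneg (ih0 i p) (h0 p j)
    · intro i
      rw [pow_succ]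
      simp only [Matrix.mul_apply]
      rw [Finset.sum_comm]
      calc ∑ p, ∑ j, (T ^ k) i p * T p j
          = ∑ p, (T ^ k) i p * ∑ j, T p j := by
            simp [Finset.mul_sum]
        _ = 1 := by simp [h1, ih1 i]

lemma fp_pow_colsum {n : ℕ} (W : Matrix (Fin n) (Fin n) ℝ) (ρ : ℝ) (hρ : 0 ≤ ρ)
    (h0 : ∀ i j, 0 ≤ W i j) (h1 : ∀ j, ∑ q, W q j ≤ ρ) (k : ℕ) :
    (∀ i j, 0 ≤ (W ^ k) i j) ∧ (∀ j, ∑ q, (W ^ k) q j ≤ ρ ^ k) := by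
  induction k with
  | zero =>
    constructor
    · intro i j; simp [Matrix.one_apply]; positivity
    · intro j; simp [Matrix.one_apply]
  | succ k ih =>
    obtain ⟨ih0, ih1⟩ := ih
    constructor
    · intro i j
      rw [pow_succ, Matrix.mul_apply]
      exact Finset.sum_nonneg fun p _ => mul_nonneg (ih0 i p) (h0 p j)
    · intro j
      rw [pow_succ]
      simp only [Matrix.mul_apply]
      rw [Finset.sum_comm]
      calc ∑ r, ∑ q, (W ^ k) q r * W r j
          = ∑ r, (∑ q, (W ^ k) q r) * W r j := by simp [Finset.sum_mul]
        _ ≤ ∑ r, ρ ^ k * W r j := by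
            refine Finset.sum_le_sum fun r _ => ?_
            exact mul_le_mul_of_nonneg_right (ih1 r) (h0 r j)
        _ = ρ ^ k * ∑ r, W r j := by rw [Finset.mul_sum]
        _ ≤ ρ ^ k * ρ := mul_le_mul_of_nonneg_left (h1 j) (by positivity)
        _ = ρ ^ (k + 1) := by ring

lemma fp_entry_bound {n m : ℕ} (P : Matrix (Fin n) (Fin n) ℝ) (M : Matrix (Fin n) (Fin m) ℝ)
    (Q : Matrix (Fin m) (Fin m) ℝ) (C s : ℝ) (hC : 0 ≤ C)
    (hP0 : ∀ i j, 0 ≤ P i j) (hP1 : ∀ i, ∑ j, P i j = 1)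
    (hM : ∀ p q, |M p q| ≤ C)
    (hQ0 : ∀ q j, 0 ≤ Q q j) (hQs : ∀ j, ∑ q, Q q j ≤ s)
    (i : Fin n) (j : Fin m) : |(P * M * Q) i j| ≤ C * s := by
  have h1 : ∀ q, |(P * M) i q| ≤ C := by
    intro q
    rw [Matrix.mul_apply]
    calc |∑ p, P i p * M p q| ≤ ∑ p, |P i p * M p q| := Finset.abs_sum_le_sum_abs _ _
      _ ≤ ∑ p, P i p * C := by
          refine Finset.sum_le_sum fun p _ => ?_
          rw [abs_mul, abs_of_nonneg (hP0 i p)]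
          exact mul_le_mul_of_nonneg_left (hM p q) (hP0 i p)
      _ = C := by rw [← Finset.sum_mul, hP1 i, one_mul]
  rw [Matrix.mul_apply]
  calc |∑ q, (P * M) i q * Q q j| ≤ ∑ q, |(P * M) i q * Q q j| := Finset.abs_sum_le_sum_abs _ _
    _ ≤ ∑ q, C * Q q j := by
        refine Finset.sum_le_sum fun q _ => ?_
        rw [abs_mul, abs_of_nonneg (hQ0 q j)]
        exact mul_le_mul_of_nonneg_right (h1 q) (hQ0 q j)
    _ = C * ∑ q, Q q j := by rw [Finset.mul_sum]
    _ ≤ C * s := mul_le_mul_of_nonneg_left (hQs j) hC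

/-- With `T = D⁻¹ A` and `W₂` nonnegative with column sums `< 1`, the series
`∑ T^k X W₁ W₂^k` converges entrywise and its sum is the unique solution of the feature
propagation equation `X̃ = X W₁ + T X̃ W₂`. -/
theorem feature_propagation_series_solution
    {n d d' : ℕ}
    (A : Matrix (Fin n) (Fin n) ℝ)
    (hA01 : ∀ i j, A i j = 0 ∨ A i j = 1)
    (hdeg : ∀ i, 0 < ∑ j, A i j)
    (T : Matrix (Fin n) (Fin n) ℝ)
    (hT : T = (Matrix.diagonal fun i => (∑ j, A i j)⁻¹) * A)
    (X : Matrix (Fin n) (Fin d) ℝ)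
    (W₁ : Matrix (Fin d) (Fin d') ℝ)
    (W₂ : Matrix (Fin d') (Fin d') ℝ)
    (hW₂nonneg : ∀ q j, 0 ≤ W₂ q j)
    (hW₂col : ∀ j, ∑ q, W₂ q j < 1) :
    ∃ S : Matrix (Fin n) (Fin d') ℝ,
      HasSum (fun k : ℕ => T ^ k * (X * W₁) * W₂ ^ k) S ∧
      S = X * W₁ + T * S * W₂ ∧
      ∀ Y : Matrix (Fin n) (Fin d') ℝ, Y = X * W₁ + T * Y * W₂ → Y = S := by
  -- trivial case: the matrix space is a subsingleton
  by_cases htriv : n = 0 ∨ d' = 0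
  · have hz : ∀ M : Matrix (Fin n) (Fin d') ℝ, M = 0 := by
      intro M; ext i j
      rcases htriv with h | h
      · exact absurd i.isLt (by omega)
      · exact absurd j.isLt (by omega)
    refine ⟨0, ?_, ?_, ?_⟩
    · have : (fun k : ℕ => T ^ k * (X * W₁) * W₂ ^ k) = fun _ => (0 : Matrix (Fin n) (Fin d') ℝ) :=
        funext fun k => hz _
      rw [this]; exact hasSum_zero
    · exact (hz _).symm
    · intro Y _; rw [hz Y]
  push_neg at htriv
  obtain ⟨hn, hd'⟩ := htriv
  haveI : Nonempty (Fin n) := ⟨⟨0, Nat.pos_of_ne_zero hn⟩⟩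
  haveI : Nonempty (Fin d') := ⟨⟨0, Nat.pos_of_ne_zero hd'⟩⟩
  -- T is row-stochastic
  have hTfacts : (∀ i j, 0 ≤ T i j) ∧ (∀ i, ∑ j, T i j = 1) := by
    subst hT
    constructor
    · intro i j
      rw [Matrix.diagonal_mul]
      refine mul_nonneg (inv_nonneg.mpr (hdeg i).le) ?_
      rcases hA01 i j with h | h <;> rw [h] <;> norm_num
    · intro i
      simp only [Matrix.diagonal_mul]
      rw [← Finset.mul_sum, inv_mul_cancel₀ (hdeg i).ne']
  obtain ⟨hT0, hT1⟩ := hTfacts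
  -- ρ : uniform column-sum bound for W₂
  set ρ : ℝ := Finset.univ.sup' Finset.univ_nonempty (fun j => ∑ q, W₂ q j) with hρdef
  have hρcol : ∀ j, ∑ q, W₂ q j ≤ ρ := by
    intro j; rw [hρdef]; exact Finset.le_sup' (fun j => ∑ q, W₂ q j) (Finset.mem_univ j)
  have hρlt : ρ < 1 := by
    rw [hρdef]; exact (Finset.sup'_lt_iff Finset.univ_nonempty).mpr fun j _ => hW₂col j
  have hρ0 : 0 ≤ ρ := by
    obtain ⟨j₀⟩ := (inferInstance : Nonempty (Fin d'))
    exact le_trans (Finset.sum_nonneg fun q _ => hW₂nonneg q j₀) (hρcol j₀)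
  set B : Matrix (Fin n) (Fin d') ℝ := X * W₁ with hBdef
  -- generic bound
  have key : ∀ (M : Matrix (Fin n) (Fin d') ℝ) (CM : ℝ), 0 ≤ CM → (∀ p q, |M p q| ≤ CM) →
      ∀ (k : ℕ) (i : Fin n) (j : Fin d'), |(T ^ k * M * W₂ ^ k) i j| ≤ CM * ρ ^ k := by
    intro M CM hCM hM k i j
    exact fp_entry_bound (T ^ k) M (W₂ ^ k) CM (ρ ^ k) hCM
      (fp_pow_rowsum T hT0 hT1 k).1 (fp_pow_rowsum T hT0 hT1 k).2 hM
      (fp_pow_colsum W₂ ρ hρ0 hW₂nonneg hρcol k).1 (fp_pow_colsum W₂ ρ hρ0 hW₂nonneg hρcol k).2 i j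
  have maxabs : ∀ M : Matrix (Fin n) (Fin d') ℝ, ∃ CM : ℝ, 0 ≤ CM ∧ ∀ p q, |M p q| ≤ CM := by
    intro M
    refine ⟨Finset.univ.sup' Finset.univ_nonempty
      (fun p => Finset.univ.sup' Finset.univ_nonempty fun q => |M p q|), ?_, ?_⟩
    · obtain ⟨p₀⟩ := (inferInstance : Nonempty (Fin n))
      obtain ⟨q₀⟩ := (inferInstance : Nonempty (Fin d'))
      exact le_trans (abs_nonneg (M p₀ q₀))
        (le_trans (Finset.le_sup' (fun q => |M p₀ q|) (Finset.mem_univ q₀))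
          (Finset.le_sup' (fun p => Finset.univ.sup' Finset.univ_nonempty fun q => |M p q|)
            (Finset.mem_univ p₀)))
    · intro p q
      exact le_trans (Finset.le_sup' (fun q => |M p q|) (Finset.mem_univ q))
        (Finset.le_sup' (fun p => Finset.univ.sup' Finset.univ_nonempty fun q => |M p q|)
          (Finset.mem_univ p))
  obtain ⟨C, hC0, hC⟩ := maxabs B
  -- entrywise summability
  have hsummable : ∀ i j, Summable fun k : ℕ => (T ^ k * B * W₂ ^ k) i j := by
    intro i j
    refine Summable.of_norm_bounded (g := fun k => C * ρ ^ k)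
      ((summable_geometric_of_lt_one hρ0 hρlt).mul_left C) ?_
    intro k
    simpa [Real.norm_eq_abs] using key B C hC0 hC k i j
  set S : Matrix (Fin n) (Fin d') ℝ := fun i j => ∑' k : ℕ, (T ^ k * B * W₂ ^ k) i j with hSdef
  have hS : HasSum (fun k : ℕ => T ^ k * B * W₂ ^ k) S := by
    exact Pi.hasSum.mpr fun i => Pi.hasSum.mpr fun j => (hsummable i j).hasSum
  -- fixed point equation
  have hshift : HasSum (fun k : ℕ => T ^ (k + 1) * B * W₂ ^ (k + 1)) (S - B) := by
    have := (hasSum_nat_add_iff' 1).mpr hS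
    simpa using this
  have hmul : HasSum (fun k : ℕ => T ^ (k + 1) * B * W₂ ^ (k + 1)) (T * S * W₂) := by
    have h2 := fp_hasSum_mul_mul T W₂ _ S hS
    have h3 : (fun k : ℕ => T * (T ^ k * B * W₂ ^ k) * W₂)
        = fun k : ℕ => T ^ (k + 1) * B * W₂ ^ (k + 1) := by
      funext k
      rw [pow_succ' T, pow_succ W₂]
      simp only [Matrix.mul_assoc]
    rwa [h3] at h2
  have heq : T * S * W₂ = S - B := hmul.unique hshift
  have hrec : S = B + T * S * W₂ := by rw [heq]; abel
  refine ⟨S, hS, hrec, ?_⟩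
  -- uniqueness
  intro Y hY
  have hE : Y - S = T * (Y - S) * W₂ := by
    calc Y - S = (B + T * Y * W₂) - (B + T * S * W₂) := by rw [← hY, ← hrec]
      _ = T * (Y - S) * W₂ := by rw [Matrix.mul_sub, Matrix.sub_mul]; abel
  have hiter : ∀ k : ℕ, Y - S = T ^ k * (Y - S) * W₂ ^ k := by
    intro k
    induction k with
    | zero => simp
    | succ k ih =>
      calc Y - S = T * (Y - S) * W₂ := hE
        _ = T * (T ^ k * (Y - S) * W₂ ^ k) * W₂ := by rw [← ih]
        _ = T ^ (k + 1) * (Y - S) * W₂ ^ (k + 1) := by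
            rw [pow_succ' T, pow_succ W₂]
            simp only [Matrix.mul_assoc]
  obtain ⟨CE, hCE0, hCE⟩ := maxabs (Y - S)
  have hzero : Y - S = 0 := by
    ext i j
    have hb : ∀ k : ℕ, |(Y - S) i j| ≤ CE * ρ ^ k := by
      intro k
      rw [hiter k]
      exact key (Y - S) CE hCE0 hCE k i j
    have htend : Filter.Tendsto (fun k : ℕ => CE * ρ ^ k) Filter.atTop (nhds 0) := by
      have := (tendsto_pow_atTop_nhds_zero_of_lt_one hρ0 hρlt).const_mul CE
      simpa using this
    have : |(Y - S) i j| ≤ 0 := ge_of_tendsto' htend hb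
    have : (Y - S) i j = 0 := abs_nonpos_iff.mp this
    simpa using this
  have : Y = S := by
    have := sub_eq_zero.mp hzero
    exact this
  exact this
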